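/- Let q be a prime power and let M be a simple GF(q)-representable paving matroid with no coloops. Then the ground set of M is a circuit of M, or r(M) ≤ 2q. -/

import Mathlib

open Finset in
lemma comb_aux {F : Type*} [Field F] [Fintype F] [DecidableEq F] {ι : Type*} [Fintype ι]
    (x y : ι → F)
    (hx : (Finset.univ.filter fun i => x i = 0).card ≤ 1)
    (hy : (Finset.univ.filter fun i => y i = 0).card ≤ 1)
    (hxy : ∀ β : F, (Finset.univ.filter fun i => x i + β * y i = 0).card ≤ 2) :
    Fintype.card ι ≤ 2 * Fintype.card F := by
  classical
  set Z : Option F → ι → F := fun o i => o.elim (y i) (fun β => x i + β * y i) with hZ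
  have key : ∀ i : ι, ∃ o : Option F, Z o i = 0 := by
    intro i
    by_cases h : y i = 0
    · exact ⟨none, h⟩
    · refine ⟨some (-(x i) / y i), ?_⟩
      simp only [hZ, Option.elim]
      field_simp
      ring
  have lower : Fintype.card ι ≤ ∑ o : Option F, (Finset.univ.filter fun i => Z o i = 0).card := by
    have : ∀ o : Option F, (Finset.univ.filter fun i => Z o i = 0).card
        = ∑ i : ι, (if Z o i = 0 then 1 else 0) := by
      intro o; rw [Finset.card_filter]
    simp only [this]
    rw [Finset.sum_comm]
    have : ∀ i : ι, 1 ≤ ∑ o : Option F, (if Z o i = 0 then 1 else 0) := by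
      intro i
      obtain ⟨o, ho⟩ := key i
      have h1 : (if Z o i = 0 then 1 else 0 : ℕ)
          ≤ ∑ o' : Option F, (if Z o' i = 0 then 1 else 0 : ℕ) :=
        Finset.single_le_sum (f := fun o' => (if Z o' i = 0 then (1:ℕ) else 0))
          (fun _ _ => Nat.zero_le _) (Finset.mem_univ o)
      simpa [ho] using h1
    calc Fintype.card ι = ∑ _i : ι, 1 := by simp
      _ ≤ _ := Finset.sum_le_sum (fun i _ => this i)
  have upper : ∑ o : Option F, (Finset.univ.filter fun i => Z o i = 0).card
      ≤ 2 * Fintype.card F := by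
    rw [Fintype.sum_option]
    have h0 : (Finset.univ.filter fun i => Z (some 0) i = 0).card ≤ 1 := by
      have : (Finset.univ.filter fun i => Z (some 0) i = 0)
          = (Finset.univ.filter fun i => x i = 0) := by
        apply Finset.filter_congr; intro i _; simp [hZ]
      rw [this]; exact hx
    have hnone : (Finset.univ.filter fun i => Z none i = 0).card ≤ 1 := by
      simpa [hZ] using hy
    have hrest : ∑ β ∈ (Finset.univ.erase (0 : F)),
        (Finset.univ.filter fun i => Z (some β) i = 0).card ≤ (Fintype.card F - 1) * 2 := by
      calc _ ≤ (Finset.univ.erase (0:F)).card • 2 :=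
            Finset.sum_le_card_nsmul _ _ 2 (fun β _ => hxy β)
        _ = (Fintype.card F - 1) * 2 := by
            rw [Finset.card_erase_of_mem (Finset.mem_univ _), Finset.card_univ, smul_eq_mul]
    have hsplit : ∑ β : F, (Finset.univ.filter fun i => Z (some β) i = 0).card
        = (Finset.univ.filter fun i => Z (some 0) i = 0).card
          + ∑ β ∈ (Finset.univ.erase (0 : F)),
            (Finset.univ.filter fun i => Z (some β) i = 0).card :=
      (Finset.add_sum_erase _ _ (Finset.mem_univ 0)).symm
    have hq1 : 1 ≤ Fintype.card F := Fintype.card_pos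
    omega
  omega

namespace Matroid

variable {α : Type*}

/-- A circuit of a matroid is a minimal dependent set. -/
def Circuit (M : Matroid α) (C : Set α) : Prop :=
  M.Dep C ∧ ∀ D, D ⊂ C → M.Indep D

/-- A coloop is an element belonging to every basis. -/
def Coloop (M : Matroid α) (e : α) : Prop :=
  e ∈ M.E ∧ ∀ B, M.IsBase B → e ∈ B

/-- A matroid is simple if every subset of the ground set with at most two
elements is independent. -/
def Simple (M : Matroid α) : Prop :=
  ∀ e ∈ M.E, ∀ f ∈ M.E, M.Indep {e, f}

/-- The rank of a matroid: the supremum of the cardinalities of its bases. -/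
noncomputable def rk (M : Matroid α) : ℕ :=
  sSup {n | ∃ B, M.IsBase B ∧ B.ncard = n}

/-- A matroid is representable over a field `F` if independence in `M` coincides
with linear independence under some assignment of vectors to ground set elements. -/
def RepresentableOver (M : Matroid α) (F : Type) [Field F] : Prop :=
  ∃ (n : ℕ) (φ : α → (Fin n → F)),
    ∀ I, I ⊆ M.E → (M.Indep I ↔ LinearIndependent F (fun x : I => φ x))

/-- An element `e` is `k`-loose if every circuit containing `e` has size
greater than `r - k`, where `r` is the rank of the matroid. -/
def KLoose (M : Matroid α) (k : ℕ) (e : α) : Prop :=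
  e ∈ M.E ∧ ∀ C, M.Circuit C → e ∈ C → M.rk - k < C.ncard

/-- A matroid is `k`-paving if every element is `k`-loose. -/
def KPaving (M : Matroid α) (k : ℕ) : Prop :=
  ∀ e ∈ M.E, M.KLoose k e

lemma exists_circuit_subset' {M : Matroid α} :
    ∀ (n : ℕ) (D : Set α), D.Finite → D.ncard = n → M.Dep D → ∃ C ⊆ D, M.Circuit C := by
  intro n
  induction n using Nat.strong_induction_on with
  | _ n ih =>
    intro D hfin hcard hdep
    by_cases h : ∀ D', D' ⊂ D → M.Indep D'
    · exact ⟨D, subset_rfl, hdep, h⟩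
    · push_neg at h
      obtain ⟨D', hsub, hni⟩ := h
      have hdep' : M.Dep D' := ⟨hni, hsub.subset.trans hdep.subset_ground⟩
      obtain ⟨C, hCD, hC⟩ := ih D'.ncard (hcard ▸ Set.ncard_lt_ncard hsub hfin) D'
        (hfin.subset hsub.subset) rfl hdep'
      exact ⟨C, hCD.trans hsub.subset, hC⟩

lemma exists_circuit_subset {M : Matroid α} {D : Set α} (hfin : D.Finite) (hdep : M.Dep D) :
    ∃ C ⊆ D, M.Circuit C :=
  exists_circuit_subset' D.ncard D hfin rfl hdep

lemma rk_eq_ncard {M : Matroid α} {B : Set α} (hB : M.IsBase B) : M.rk = B.ncard := by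
  have hset : {n | ∃ B', M.IsBase B' ∧ B'.ncard = n} = {B.ncard} := by
    ext n
    constructor
    · rintro ⟨B', hB', rfl⟩
      exact hB'.ncard_eq_ncard_of_isBase hB
    · rintro rfl
      exact ⟨B, hB, rfl⟩
  rw [rk, hset, csSup_singleton]

lemma indep_of_ncard_lt {M : Matroid α} [M.Finite]
    (hpaving : ∀ C, M.Circuit C → M.rk ≤ C.ncard)
    {D : Set α} (hD : D ⊆ M.E) (hcard : D.ncard < M.rk) : M.Indep D := by
  by_contra h
  have hfin : D.Finite := M.ground_finite.subset hD
  obtain ⟨C, hCD, hC⟩ := exists_circuit_subset hfin ⟨h, hD⟩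
  have h1 := hpaving C hC
  have h2 := Set.ncard_le_ncard hCD hfin
  omega

end Matroid

/-- A simple `GF(q)`-representable paving matroid with no coloops is a circuit, or
has rank at most `2q`. Here paving means every circuit has size at least the rank. -/
theorem paving_rank_bound {α : Type*} (q : ℕ) (hq : IsPrimePow q)
    (F : Type) [Field F] [Fintype F] (hF : Fintype.card F = q)
    (M : Matroid α) [M.Finite] (hsimple : M.Simple)
    (hrep : M.RepresentableOver F) (hcoloop : ∀ x, ¬ M.Coloop x)
    (hpaving : ∀ C, M.Circuit C → M.rk ≤ C.ncard) :
    M.Circuit M.E ∨ M.rk ≤ 2 * q := by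
  classical
  have hq2 : 2 ≤ q := hq.two_le
  by_cases hsmall : M.rk ≤ 2 * q
  · exact Or.inr hsmall
  push_neg at hsmall
  obtain ⟨B, hB⟩ := M.exists_isBase
  have hBE : B ⊆ M.E := hB.subset_ground
  have hEfin : M.E.Finite := M.ground_finite
  have hBfin : B.Finite := hEfin.subset hBE
  have hrk : M.rk = B.ncard := Matroid.rk_eq_ncard hB
  have hr5 : 4 < B.ncard := by omega
  by_cases h2 : ∃ e ∈ M.E \ B, ∃ f ∈ M.E \ B, e ≠ f
  · -- two elements outside a base : rank bound
    right
    obtain ⟨e, he, f, hf, hef⟩ := h2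
    obtain ⟨n, φ, hφ⟩ := hrep
    haveI : Fintype ↥B := hBfin.fintype
    have hliB : LinearIndependent F (fun x : ↥B => φ x) := (hφ B hBE).mp hB.indep
    have hrange : (Set.range fun x : ↥B => φ ↑x) = φ '' B := (Set.image_eq_range φ B).symm
    have hspan : ∀ g ∈ M.E \ B, φ g ∈ Submodule.span F (φ '' B) := by
      intro g hg
      by_contra h
      have hli : LinearIndependent F (fun x : ↥(insert g B) => φ x) :=
        (linearIndepOn_insert (f := φ) hg.2).mpr ⟨hliB, h⟩
      exact (hB.insert_dep hg).1 ((hφ _ (Set.insert_subset hg.1 hBE)).mpr hli)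
    have hA : ∀ g ∈ M.E \ B, ∀ i ∈ B, ∀ j ∈ B, i ≠ j →
        φ g ∉ Submodule.span F (φ '' (B \ {i, j})) := by
      intro g hg i hi j hj hij hmem
      have hsub : insert g (B \ {i, j}) ⊆ M.E :=
        Set.insert_subset hg.1 (Set.diff_subset.trans hBE)
      have hcard : (insert g (B \ {i, j})).ncard < M.rk := by
        have h1 : (B \ ({i, j} : Set α)).ncard = B.ncard - 2 := by
          rw [Set.ncard_diff (by simp [Set.insert_subset_iff, hi, hj] : ({i, j} : Set α) ⊆ B),
            Set.ncard_pair hij]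
        have h2 := Set.ncard_insert_le g (B \ ({i, j} : Set α))
        rw [hrk]; omega
      have hind := Matroid.indep_of_ncard_lt hpaving hsub hcard
      have hli := (hφ _ hsub).mp hind
      have hgnot : g ∉ B \ ({i, j} : Set α) := fun h => hg.2 h.1
      exact ((linearIndepOn_insert (f := φ) hgnot).mp hli).2 hmem
    have hB3 : ∀ (β : F), ∀ i ∈ B, ∀ j ∈ B, ∀ k ∈ B, i ≠ j → i ≠ k → j ≠ k →
        φ e + β • φ f ∉ Submodule.span F (φ '' (B \ {i, j, k})) := by
      intro β i hi j hj k hk hij hik hjk hmem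
      set S := B \ ({i, j, k} : Set α) with hS
      have hfS : f ∉ S := fun h => hf.2 h.1
      have heS : e ∉ insert f S := by
        intro h
        rcases Set.mem_insert_iff.mp h with h | h
        · exact hef h
        · exact he.2 h.1
      have hsub : insert e (insert f S) ⊆ M.E :=
        Set.insert_subset he.1 (Set.insert_subset hf.1 (Set.diff_subset.trans hBE))
      have hcard : (insert e (insert f S)).ncard < M.rk := by
        have h1 : S.ncard = B.ncard - 3 := by
          rw [hS, Set.ncard_diff
            (by simp [Set.insert_subset_iff, hi, hj, hk] : ({i, j, k} : Set α) ⊆ B)]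
          congr 1
          rw [Set.ncard_insert_of_notMem (by simp [hij, hik]), Set.ncard_pair hjk]
        have h2 := Set.ncard_insert_le f S
        have h3 := Set.ncard_insert_le e (insert f S)
        rw [hrk]; omega
      have hind := Matroid.indep_of_ncard_lt hpaving hsub hcard
      have hli := (hφ _ hsub).mp hind
      have hnot := ((linearIndepOn_insert (f := φ) heS).mp hli).2
      apply hnot
      have heq : φ e = (φ e + β • φ f) - β • φ f := by abel
      rw [heq]
      refine Submodule.sub_mem _ ?_ (Submodule.smul_mem _ _ (Submodule.subset_span ?_))
      · refine Submodule.span_mono ?_ hmem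
        rw [Set.image_insert_eq]
        exact Set.subset_insert _ _
      · rw [Set.image_insert_eq]
        exact Set.mem_insert _ _
    -- coordinates
    set W := Submodule.span F (Set.range fun x : ↥B => φ ↑x) with hW
    let bas : Module.Basis ↥B F W := Module.Basis.span hliB
    have hWeq : W = Submodule.span F (φ '' B) := by rw [hW, hrange]
    have hveW : φ e ∈ W := by rw [hWeq]; exact hspan e he
    have hvfW : φ f ∈ W := by rw [hWeq]; exact hspan f hf
    set ve : W := ⟨φ e, hveW⟩ with hve
    set vf : W := ⟨φ f, hvfW⟩ with hvf
    have hcoords : ∀ (w : W) (T : Set α), (∀ i : ↥B, (i : α) ∈ T → bas.repr w i = 0) →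
        (w : Fin n → F) ∈ Submodule.span F (φ '' (B \ T)) := by
      intro w T hzero
      have hsum : (w : Fin n → F) = ∑ i : ↥B, bas.repr w i • φ ↑i := by
        conv_lhs => rw [← bas.sum_repr w]
        rw [AddSubmonoidClass.coe_finset_sum]
        refine Finset.sum_congr rfl fun i _ => ?_
        rw [SetLike.val_smul]
        congr 1
        exact congrArg Subtype.val (Module.Basis.span_apply hliB i)
      rw [hsum]
      refine Submodule.sum_mem _ fun i _ => ?_
      by_cases hiT : (i : α) ∈ T
      · rw [hzero i hiT, zero_smul]; exact Submodule.zero_mem _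
      · exact Submodule.smul_mem _ _ (Submodule.subset_span ⟨i, ⟨i.2, hiT⟩, rfl⟩)
    set x : ↥B →₀ F := bas.repr ve with hx
    set y : ↥B →₀ F := bas.repr vf with hy
    have hxzero : ∀ i j : ↥B, i ≠ j → ¬(x i = 0 ∧ x j = 0) := by
      rintro i j hij ⟨h1, h2⟩
      refine hA e he i i.2 j j.2 (fun h => hij (Subtype.ext h)) ?_
      refine hcoords ve {(i : α), (j : α)} ?_
      intro l hl
      rcases Set.mem_insert_iff.mp hl with h | h
      · rw [← hx]; rwa [Subtype.ext h]
      · rw [← hx]; rwa [Subtype.ext (Set.mem_singleton_iff.mp h)]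
    have hyzero : ∀ i j : ↥B, i ≠ j → ¬(y i = 0 ∧ y j = 0) := by
      rintro i j hij ⟨h1, h2⟩
      refine hA f hf i i.2 j j.2 (fun h => hij (Subtype.ext h)) ?_
      refine hcoords vf {(i : α), (j : α)} ?_
      intro l hl
      rcases Set.mem_insert_iff.mp hl with h | h
      · rw [← hy]; rwa [Subtype.ext h]
      · rw [← hy]; rwa [Subtype.ext (Set.mem_singleton_iff.mp h)]
    have hxyzero : ∀ (β : F), ∀ i j k : ↥B, i ≠ j → i ≠ k → j ≠ k →
        ¬(x i + β * y i = 0 ∧ x j + β * y j = 0 ∧ x k + β * y k = 0) := by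
      rintro β i j k hij hik hjk ⟨h1, h2, h3⟩
      refine hB3 β i i.2 j j.2 k k.2 (fun h => hij (Subtype.ext h))
        (fun h => hik (Subtype.ext h)) (fun h => hjk (Subtype.ext h)) ?_
      have hrepr : ∀ l : ↥B, bas.repr (ve + β • vf) l = x l + β * y l := by
        intro l
        rw [map_add, map_smul, Finsupp.add_apply, Finsupp.smul_apply, smul_eq_mul, ← hx, ← hy]
      have := hcoords (ve + β • vf) {(i : α), (j : α), (k : α)} ?_
      · simpa using this
      intro l hl
      rcases Set.mem_insert_iff.mp hl with h | h
      · rw [hrepr]; rwa [Subtype.ext h]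
      rcases Set.mem_insert_iff.mp h with h | h
      · rw [hrepr]; rwa [Subtype.ext h]
      · rw [hrepr]; rwa [Subtype.ext (Set.mem_singleton_iff.mp h)]
    have hcomb : Fintype.card ↥B ≤ 2 * Fintype.card F := by
      refine comb_aux (fun i => x i) (fun i => y i) ?_ ?_ ?_
      · rw [Finset.card_le_one]
        intro a ha b hb
        by_contra hab
        exact hxzero a b hab ⟨(Finset.mem_filter.mp ha).2, (Finset.mem_filter.mp hb).2⟩
      · rw [Finset.card_le_one]
        intro a ha b hb
        by_contra hab
        exact hyzero a b hab ⟨(Finset.mem_filter.mp ha).2, (Finset.mem_filter.mp hb).2⟩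
      · intro β
        by_contra h
        push_neg at h
        obtain ⟨a, b, c, ha, hb, hc, hab, hac, hbc⟩ := Finset.two_lt_card_iff.mp h
        exact hxyzero β a b c hab hac hbc
          ⟨(Finset.mem_filter.mp ha).2, (Finset.mem_filter.mp hb).2, (Finset.mem_filter.mp hc).2⟩
    have hcardB : B.ncard = Fintype.card ↥B := by
      rw [Set.ncard_eq_toFinset_card', Set.toFinset_card]
    rw [hrk, hcardB, ← hF]
    exact hcomb
  · -- at most one element outside B
    push_neg at h2
    by_cases h1 : ∃ e, e ∈ M.E \ B
    · obtain ⟨e, he⟩ := h1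
      have hE : M.E = insert e B := by
        apply Set.Subset.antisymm
        · intro z hz
          by_cases hzB : z ∈ B
          · exact Set.mem_insert_of_mem _ hzB
          · exact (h2 z ⟨hz, hzB⟩ e he).symm ▸ Set.mem_insert _ _
        · exact Set.insert_subset he.1 hBE
      by_cases hall : ∀ b ∈ B, M.Indep (insert e (B \ {b}))
      · left
        constructor
        · rw [hE]; exact hB.insert_dep he
        · intro D hD
          have hsub : D ⊆ insert e B := hE ▸ hD.subset
          by_cases heD : e ∈ D
          · have hex : ∃ b ∈ B, b ∉ D := by
              by_contra h
              push_neg at h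
              exact hD.2 (hE ▸ Set.insert_subset heD h)
            obtain ⟨b, hbB, hbD⟩ := hex
            have hDsub : D ⊆ insert e (B \ {b}) := by
              intro z hz
              rcases Set.mem_insert_iff.mp (hsub hz) with h | h
              · exact h ▸ Set.mem_insert _ _
              · refine Set.mem_insert_of_mem _ ⟨h, ?_⟩
                intro hzb
                exact hbD ((Set.mem_singleton_iff.mp hzb) ▸ hz)
            exact (hall b hbB).subset hDsub
          · have hDB : D ⊆ B := by
              intro z hz
              rcases Set.mem_insert_iff.mp (hsub hz) with h | h
              · exact absurd (h ▸ hz) heD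
              · exact h
            exact hB.indep.subset hDB
      · push_neg at hall
        obtain ⟨b, hbB, hbdep⟩ := hall
        exfalso
        apply hcoloop b
        refine ⟨hBE hbB, fun B' hB' => ?_⟩
        by_contra hbB'
        have hsubS : B' ⊆ insert e (B \ {b}) := by
          intro z hz
          rcases Set.mem_insert_iff.mp ((hE ▸ hB'.subset_ground) hz) with h | h
          · exact h ▸ Set.mem_insert _ _
          · refine Set.mem_insert_of_mem _ ⟨h, ?_⟩
            intro hzb
            exact hbB' ((Set.mem_singleton_iff.mp hzb) ▸ hz)
        have hSfin : (insert e (B \ {b})).Finite := (hBfin.diff).insert e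
        have hScard : (insert e (B \ {b})).ncard ≤ B'.ncard := by
          have h1 := Set.ncard_insert_le e (B \ {b})
          have h2 : (B \ {b} : Set α).ncard = B.ncard - 1 :=
            Set.ncard_diff_singleton_of_mem hbB
          have h3 : B'.ncard = B.ncard := hB'.ncard_eq_ncard_of_isBase hB
          omega
        have hEq : B' = insert e (B \ {b}) :=
          Set.eq_of_subset_of_ncard_le hsubS hScard hSfin
        exact hbdep (hEq ▸ hB'.indep)
    · push_neg at h1
      have hE : M.E = B :=
        Set.Subset.antisymm (fun z hz => by_contra fun h => h1 z ⟨hz, h⟩) hBE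
      have hBne : B.Nonempty := by
        rw [Set.nonempty_iff_ne_empty]
        intro h
        rw [h, Set.ncard_empty] at hrk
        omega
      obtain ⟨b, hbB⟩ := hBne
      exfalso
      apply hcoloop b
      refine ⟨hBE hbB, fun B' hB' => ?_⟩
      have hEq : B' = B := hB'.eq_of_subset_indep hB.indep (hE ▸ hB'.subset_ground)
      exact hEq ▸ hbB
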